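/- Let E be a word equation on n unknowns and let h be a solution of E of rank r and length type L. Then there exist a monoid morphism f: Ξ* → Ξ*, a monoid morphism θ: Ξ* → Σ*, and polynomials p_{ij} ∈ ℤ[X] (1 ≤ i, j ≤ n) such that: (1) h = θ ∘ f; (2) f is a solution of E (i.e., f(u) = f(v) for E: u = v); (3) θ(x) ≠ ε for every unknown x; (4) P((g ∘ f)(x_i)) = Σ_{j=1}^{n} p_{ij} · P(g(x_j)) for every i whenever g: Ξ* → Σ* is a morphism of the same length type as θ; (5) at least r of the n column vectors (p_{1j}, …, p_{nj}), j = 1, …, n, are linearly independent over the field ℚ(X) of rational functions. -/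

import Mathlib

open Polynomial

/-- The characteristic polynomial `P(w)` of a word. -/
noncomputable def wordPoly (w : List ℕ) : Polynomial ℤ :=
  ∑ i ∈ Finset.range w.length, Polynomial.C (w.getD i 0 : ℤ) * Polynomial.X ^ i

/-- Application of a morphism (given by the images of the unknowns) to a word. -/
def mApply {n : ℕ} {β : Type*} (h : Fin n → List β) (w : List (Fin n)) : List β :=
  (w.map h).flatten

/-- The morphism maps every unknown to a word over the alphabet `A`. -/
def IntoAlph {n : ℕ} (A : Finset ℕ) (h : Fin n → List ℕ) : Prop :=
  ∀ i, ∀ a ∈ h i, a ∈ A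

/-- `w` is a product of words from `A`. -/
def InStar (A : Finset (List ℕ)) (w : List ℕ) : Prop :=
  ∃ l : List (List ℕ), (∀ u ∈ l, u ∈ A) ∧ l.flatten = w

/-- The combinatorial rank of a morphism: the smallest `r` such that there is a set of
`r` words whose products contain all images of the unknowns. -/
noncomputable def mRank {n : ℕ} (h : Fin n → List ℕ) : ℕ :=
  sInf {r | ∃ A : Finset (List ℕ), A.card = r ∧ ∀ i, InStar A (h i)}

/-- The length type of a morphism, as a rational vector. -/
def lenQ {n : ℕ} (h : Fin n → List ℕ) : Fin n → ℚ :=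
  fun i => ((h i).length : ℚ)

/-- `|w|_L`: the length of the image of `w` under any morphism of length type `L`. -/
def lenL {n : ℕ} (L : Fin n → ℕ) (w : List (Fin n)) : ℕ :=
  (w.map L).sum

/-- The polynomial `Q_{E,x,L}` for the word equation `u = v`, the unknown `x` and the
length type `L`. -/
noncomputable def eqPoly {n : ℕ} (u v : List (Fin n)) (x : Fin n) (L : Fin n → ℕ) :
    Polynomial ℤ :=
  (∑ i ∈ Finset.range u.length,
      if u.getD i x = x then (Polynomial.X : Polynomial ℤ) ^ lenL L (u.take i) else 0)
    - ∑ i ∈ Finset.range v.length,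
      if v.getD i x = x then (Polynomial.X : Polynomial ℤ) ^ lenL L (v.take i) else 0

/-- Embedding of `ℤ[X]` into the field `ℚ(X)` of rational functions. -/
noncomputable def toRF (p : Polynomial ℤ) : RatFunc ℚ :=
  algebraMap (Polynomial ℚ) (RatFunc ℚ) (p.map (Int.castRingHom ℚ))

namespace SolFact
open Classical

/-- Schützenberger stability condition for a set of words (plus submonoid conditions). -/
def IsStable (M : Set (List ℕ)) : Prop :=
  [] ∈ M ∧ (∀ u ∈ M, ∀ v ∈ M, u ++ v ∈ M) ∧
    (∀ u v w : List ℕ, u ∈ M → v ∈ M → u ++ w ∈ M → w ++ v ∈ M → w ∈ M)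

variable {n : ℕ} (h : Fin n → List ℕ)

/-- The free hull of the images: the smallest stable set containing them. -/
def hull : Set (List ℕ) :=
  {w | ∀ M : Set (List ℕ), IsStable M → (∀ i, h i ∈ M) → w ∈ M}

lemma hull_stable : IsStable (hull h) := by
  refine ⟨fun M hM _ => hM.1, fun u hu v hv M hM hi => hM.2.1 u (hu M hM hi) v (hv M hM hi),
    fun u v w hu hv huw hwv M hM hi =>
      hM.2.2 u v w (hu M hM hi) (hv M hM hi) (huw M hM hi) (hwv M hM hi)⟩

lemma mem_hull (i : Fin n) : h i ∈ hull h := fun _ _ hi => hi i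

lemma hull_min {M : Set (List ℕ)} (hM : IsStable M) (hi : ∀ i, h i ∈ M) :
    hull h ⊆ M := fun _ hw => hw M hM hi

/-- The base of the hull: nonempty elements with no nontrivial splitting inside the hull. -/
def base : Set (List ℕ) :=
  {w | w ∈ hull h ∧ w ≠ [] ∧
    ∀ a b : List ℕ, a ∈ hull h → b ∈ hull h → a ≠ [] → b ≠ [] → a ++ b ≠ w}

lemma base_sub_hull : base h ⊆ hull h := fun _ hw => hw.1

lemma base_ne_nil {d : List ℕ} (hd : d ∈ base h) : d ≠ [] := hd.2.1

/-- `l` is a factorization of `w` into base elements. -/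
def IsFac (l : List (List ℕ)) (w : List ℕ) : Prop :=
  (∀ d ∈ l, d ∈ base h) ∧ l.flatten = w

lemma flatten_mem_hull (l : List (List ℕ)) (hl : ∀ d ∈ l, d ∈ base h) :
    l.flatten ∈ hull h := by
  induction l with
  | nil => simpa using (hull_stable h).1
  | cons d t ih =>
      have hd : d ∈ hull h := (hl d (by simp)).1
      have ht := ih (fun e he => hl e (by simp [he]))
      simpa using (hull_stable h).2.1 d hd t.flatten ht

lemma exists_fac : ∀ N (w : List ℕ), w.length ≤ N → w ∈ hull h → ∃ l, IsFac h l w := by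
  intro N
  induction N with
  | zero =>
      intro w hw _
      have : w = [] := List.length_eq_zero_iff.mp (Nat.le_zero.mp hw)
      exact ⟨[], by simp, by simp [this]⟩
  | succ N ih =>
      intro w hlen hw
      by_cases hne : w = []
      · exact ⟨[], by simp, by simp [hne]⟩
      by_cases hbase : w ∈ base h
      · exact ⟨[w], by simp [hbase], by simp⟩
      have hsplit : ¬ ∀ a b : List ℕ, a ∈ hull h → b ∈ hull h → a ≠ [] → b ≠ [] →
          a ++ b ≠ w := fun hc => hbase ⟨hw, hne, hc⟩
      push_neg at hsplit
      obtain ⟨a, b, ha, hb, hane, hbne, hab⟩ := hsplit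
      have hlab : a.length + b.length = w.length := by
        rw [← hab, List.length_append]
      have ha1 : 1 ≤ a.length := List.length_pos_iff.mpr hane
      have hb1 : 1 ≤ b.length := List.length_pos_iff.mpr hbne
      have haN : a.length ≤ N := by omega
      have hbN : b.length ≤ N := by omega
      obtain ⟨la, hla⟩ := ih a haN ha
      obtain ⟨lb, hlb⟩ := ih b hbN hb
      refine ⟨la ++ lb, ?_, ?_⟩
      · intro d hd
        rcases List.mem_append.mp hd with hd | hd
        · exact hla.1 d hd
        · exact hlb.1 d hd
      · rw [List.flatten_append, hla.2, hlb.2, hab]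

lemma fac_unique : ∀ l₁ l₂ : List (List ℕ), (∀ d ∈ l₁, d ∈ base h) →
    (∀ d ∈ l₂, d ∈ base h) → l₁.flatten = l₂.flatten → l₁ = l₂ := by
  intro l₁
  induction l₁ with
  | nil =>
      intro l₂ _ h₂ hf
      cases l₂ with
      | nil => rfl
      | cons d t =>
          exfalso
          have : d ++ t.flatten = [] := by simpa using hf.symm
          exact base_ne_nil h (h₂ d (by simp)) (List.append_eq_nil_iff.mp this).1
  | cons d₁ t₁ ih =>
      intro l₂ h₁ h₂ hf
      cases l₂ with
      | nil =>
          exfalso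
          have : d₁ ++ t₁.flatten = [] := by simpa using hf
          exact base_ne_nil h (h₁ d₁ (by simp)) (List.append_eq_nil_iff.mp this).1
      | cons d₂ t₂ =>
          simp only [List.flatten_cons] at hf
          have hd₁ : d₁ ∈ base h := h₁ d₁ (by simp)
          have hd₂ : d₂ ∈ base h := h₂ d₂ (by simp)
          have ht₁ : ∀ d ∈ t₁, d ∈ base h := fun e he => h₁ e (by simp [he])
          have ht₂ : ∀ d ∈ t₂, d ∈ base h := fun e he => h₂ e (by simp [he])
          have key : d₁ = d₂ ∧ t₁.flatten = t₂.flatten := by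
            rcases List.append_eq_append_iff.mp hf with ⟨a, ha₁, ha₂⟩ | ⟨c, hc₁, hc₂⟩
            · -- d₂ = d₁ ++ a, t₁.flatten = a ++ t₂.flatten
              have haH : a ∈ hull h := (hull_stable h).2.2 d₁ t₂.flatten a hd₁.1
                (flatten_mem_hull h t₂ ht₂) (ha₁ ▸ hd₂.1)
                (ha₂ ▸ flatten_mem_hull h t₁ ht₁)
              by_cases hane : a = []
              · subst hane
                constructor
                · simpa using ha₁.symm
                · simpa using ha₂
              · exact absurd ha₁.symm
                  (hd₂.2.2 d₁ a hd₁.1 haH (base_ne_nil h hd₁) hane)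
            · -- d₁ = d₂ ++ c, t₂.flatten = c ++ t₁.flatten
              have hcH : c ∈ hull h := (hull_stable h).2.2 d₂ t₁.flatten c hd₂.1
                (flatten_mem_hull h t₁ ht₁) (hc₁ ▸ hd₁.1)
                (hc₂ ▸ flatten_mem_hull h t₂ ht₂)
              by_cases hcne : c = []
              · subst hcne
                constructor
                · simpa using hc₁
                · simpa using hc₂.symm
              · exact absurd hc₁.symm
                  (hd₁.2.2 d₂ c hd₂.1 hcH (base_ne_nil h hd₂) hcne)
          rw [key.1, ih t₂ ht₁ ht₂ key.2]

/-- The canonical factorization of a word into base elements. -/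
noncomputable def fac (w : List ℕ) : List (List ℕ) :=
  if hw : ∃ l, IsFac h l w then hw.choose else []

lemma fac_isFac {w : List ℕ} (hw : w ∈ hull h) : IsFac h (fac h w) w := by
  have hex : ∃ l, IsFac h l w := exists_fac h w.length w le_rfl hw
  rw [fac, dif_pos hex]
  exact hex.choose_spec

lemma fac_eq {w : List ℕ} {l : List (List ℕ)} (hl : IsFac h l w) : fac h w = l := by
  have hex : ∃ l, IsFac h l w := ⟨l, hl⟩
  rw [fac, dif_pos hex]
  exact fac_unique h _ _ hex.choose_spec.1 hl.1 (hex.choose_spec.2.trans hl.2.symm)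

lemma fac_nil : fac h [] = [] := fac_eq h ⟨by simp, by simp⟩

lemma fac_base {d : List ℕ} (hd : d ∈ base h) : fac h d = [d] :=
  fac_eq h ⟨by simp [hd], by simp⟩

lemma fac_append {a b : List ℕ} (ha : a ∈ hull h) (hb : b ∈ hull h) :
    fac h (a ++ b) = fac h a ++ fac h b := by
  refine fac_eq h ⟨?_, ?_⟩
  · intro d hd
    rcases List.mem_append.mp hd with hd | hd
    · exact (fac_isFac h ha).1 d hd
    · exact (fac_isFac h hb).1 d hd
  · rw [List.flatten_append, (fac_isFac h ha).2, (fac_isFac h hb).2]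

/-- Every base element is the first factor of some image. -/
lemma exists_first {d : List ℕ} (hd : d ∈ base h) :
    ∃ i t, fac h (h i) = d :: t := by
  by_contra hcon
  push_neg at hcon
  set M : Set (List ℕ) := {w | w ∈ hull h ∧ ∀ t, fac h w ≠ d :: t} with hMdef
  have hstab : IsStable M := by
    refine ⟨⟨(hull_stable h).1, ?_⟩, ?_, ?_⟩
    · intro t ht
      rw [fac_nil h] at ht
      exact List.cons_ne_nil d t ht.symm
    · intro a ha b hb
      refine ⟨(hull_stable h).2.1 a ha.1 b hb.1, ?_⟩
      intro t ht
      rw [fac_append h ha.1 hb.1] at ht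
      rcases hfa : fac h a with _ | ⟨e, t'⟩
      · rw [hfa, List.nil_append] at ht
        exact hb.2 t ht
      · rw [hfa, List.cons_append] at ht
        have he : e = d := (List.cons.injEq _ _ _ _ ▸ ht).1
        exact ha.2 t' (by rw [hfa, he])
    · intro a b w ha hb haw hwb
      have hwH : w ∈ hull h := (hull_stable h).2.2 a b w ha.1 hb.1 haw.1 hwb.1
      refine ⟨hwH, ?_⟩
      intro t ht
      have : fac h (w ++ b) = (d :: t) ++ fac h b := by
        rw [fac_append h hwH hb.1, ht]
      exact hwb.2 (t ++ fac h b) (by rw [this, List.cons_append])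
  have himg : ∀ i, h i ∈ M := fun i => ⟨mem_hull h i, fun t => hcon i t⟩
  have hdM : d ∈ M := hull_min h hstab himg hd.1
  exact hdM.2 [] (fac_base h hd)

end SolFact

namespace SolFact

lemma lenL_nil {n : ℕ} (L : Fin n → ℕ) : lenL L [] = 0 := by simp [lenL]

lemma lenL_cons {n : ℕ} (L : Fin n → ℕ) (a : Fin n) (w : List (Fin n)) :
    lenL L (a :: w) = L a + lenL L w := by simp [lenL]

lemma wordPoly_nil : wordPoly [] = 0 := by simp [wordPoly]

lemma wordPoly_cons (a : ℕ) (w : List ℕ) :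
    wordPoly (a :: w) = C (a : ℤ) + X * wordPoly w := by
  rw [wordPoly, List.length_cons, Finset.sum_range_succ']
  simp only [List.getD_cons_succ, List.getD_cons_zero, pow_zero, mul_one]
  rw [add_comm]
  congr 1
  rw [wordPoly, Finset.mul_sum]
  refine Finset.sum_congr rfl fun i _ => ?_
  ring

lemma wordPoly_append (x y : List ℕ) :
    wordPoly (x ++ y) = wordPoly x + X ^ x.length * wordPoly y := by
  induction x with
  | nil => simp [wordPoly_nil]
  | cons a t ih =>
      rw [List.cons_append, wordPoly_cons, ih, wordPoly_cons, List.length_cons, pow_succ]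
      ring

/-- Occurrence polynomial of the unknown `j` in the word `w`, with length type `L`. -/
noncomputable def occPoly {n : ℕ} (L : Fin n → ℕ) (w : List (Fin n)) (j : Fin n) :
    Polynomial ℤ :=
  ∑ k ∈ Finset.range w.length,
    if w.getD k j = j then (X : Polynomial ℤ) ^ lenL L (w.take k) else 0

lemma occPoly_nil {n : ℕ} (L : Fin n → ℕ) (j : Fin n) : occPoly L [] j = 0 := by
  simp [occPoly]

lemma occPoly_cons {n : ℕ} (L : Fin n → ℕ) (a : Fin n) (w : List (Fin n)) (j : Fin n) :
    occPoly L (a :: w) j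
      = (if a = j then 1 else 0) + X ^ L a * occPoly L w j := by
  rw [occPoly, List.length_cons, Finset.sum_range_succ']
  simp only [List.getD_cons_succ, List.getD_cons_zero, List.take_succ_cons, List.take_zero,
    lenL_nil, pow_zero]
  rw [add_comm]
  congr 1
  rw [occPoly, Finset.mul_sum]
  refine Finset.sum_congr rfl fun k _ => ?_
  rw [mul_ite, mul_zero, lenL_cons, pow_add]

lemma mApply_nil {n : ℕ} {β : Type*} (g : Fin n → List β) : mApply g [] = [] := rfl

lemma mApply_cons {n : ℕ} {β : Type*} (g : Fin n → List β) (a : Fin n) (w : List (Fin n)) :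
    mApply g (a :: w) = g a ++ mApply g w := by simp [mApply]

lemma occ_identity {n : ℕ} (L : Fin n → ℕ) (g : Fin n → List ℕ)
    (hg : ∀ j, (g j).length = L j) (w : List (Fin n)) :
    wordPoly (mApply g w) = ∑ j : Fin n, occPoly L w j * wordPoly (g j) := by
  induction w with
  | nil => simp [mApply_nil, wordPoly_nil, occPoly_nil]
  | cons a w ih =>
      rw [mApply_cons, wordPoly_append, ih, hg a]
      simp only [occPoly_cons, add_mul, ite_mul, one_mul, zero_mul, Finset.sum_add_distrib]
      rw [Finset.sum_ite_eq]
      simp [Finset.mul_sum, mul_assoc]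

end SolFact

/-- Every solution `h` of rank `r` of a word equation `u = v` factors as `h = θ ∘ f`, where
`f` is a solution of the equation, `θ` is nonerasing, the polynomials `p i j` express
`P((g ∘ f)(xᵢ))` linearly in the `P(g(xⱼ))` for every `g` of the same length type as `θ`,
and at least `r` of the column vectors of `(p i j)` are linearly independent over `ℚ(X)`. -/
theorem solution_factorization {n : ℕ}
    (A : Finset ℕ) (hA : ∀ a ∈ A, 0 < a)
    (u v : List (Fin n)) (h : Fin n → List ℕ) (hh : IntoAlph A h)
    (hsol : mApply h u = mApply h v)
    (r : ℕ) (hr : mRank h = r) :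
    ∃ (f : Fin n → List (Fin n)) (θ : Fin n → List ℕ)
      (p : Fin n → Fin n → Polynomial ℤ),
      (∀ i, h i = mApply θ (f i)) ∧
      mApply f u = mApply f v ∧
      (∀ i, θ i ≠ []) ∧
      (∀ g : Fin n → List ℕ, IntoAlph A g → (∀ j, (g j).length = (θ j).length) →
        ∀ i, wordPoly (mApply g (f i)) = ∑ j : Fin n, p i j * wordPoly (g j)) ∧
      (∃ s : Finset (Fin n), r ≤ s.card ∧
        LinearIndependent (RatFunc ℚ) (fun j : s => fun i : Fin n => toRF (p i j))) := by
  classical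
  rcases Nat.eq_zero_or_pos n with hn | hn
  · subst hn
    have hu : u = [] := by
      cases u with
      | nil => rfl
      | cons a _ => exact a.elim0
    have hv : v = [] := by
      cases v with
      | nil => rfl
      | cons a _ => exact a.elim0
    have hr0 : r = 0 := by
      have h0 : (0:ℕ) ∈ {r | ∃ A : Finset (List ℕ), A.card = r ∧ ∀ i, InStar A (h i)} :=
        ⟨∅, by simp, fun i => i.elim0⟩
      have h1 : mRank h ≤ 0 := Nat.sInf_le h0
      rw [hr] at h1
      omega
    haveI : IsEmpty { x : Fin 0 // x ∈ (∅ : Finset (Fin 0)) } := ⟨fun x => x.1.elim0⟩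
    exact ⟨fun i => i.elim0, fun i => i.elim0, fun i => i.elim0,
      fun i => i.elim0, by rw [hu, hv], fun i => i.elim0,
      fun g _ _ i => i.elim0, ⟨∅, by simp [hr0], linearIndependent_empty_type⟩⟩
  · let d0 : Fin n := ⟨0, hn⟩
    let ι : List ℕ → Fin n := fun w =>
      if hw : w ∈ SolFact.base h then (SolFact.exists_first h hw).choose else d0
    have ι_spec : ∀ w, w ∈ SolFact.base h → ∃ t, SolFact.fac h (h (ι w)) = w :: t := by
      intro w hw
      have h1 : ι w = (SolFact.exists_first h hw).choose := dif_pos hw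
      rw [h1]
      exact (SolFact.exists_first h hw).choose_spec
    let dOf : Fin n → List ℕ := fun i => (SolFact.fac h (h i)).headI
    have dOf_ι : ∀ w, w ∈ SolFact.base h → dOf (ι w) = w := by
      intro w hw
      obtain ⟨t, ht⟩ := ι_spec w hw
      simp only [dOf, ht, List.headI_cons]
    let s : Finset (Fin n) := Finset.univ.filter (fun i => ∃ w ∈ SolFact.base h, ι w = i)
    have mem_s : ∀ j, j ∈ s ↔ ∃ w ∈ SolFact.base h, ι w = j := by
      intro j; simp [s]
    let θ : Fin n → List ℕ := fun j => if j ∈ s then dOf j else [1]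
    have θ_ι : ∀ w, w ∈ SolFact.base h → θ (ι w) = w := by
      intro w hw
      have hs : ι w ∈ s := (mem_s _).mpr ⟨w, hw, rfl⟩
      simp only [θ, if_pos hs]
      exact dOf_ι w hw
    have θ_ne : ∀ j, θ j ≠ [] := by
      intro j
      by_cases hj : j ∈ s
      · obtain ⟨w, hw, hιw⟩ := (mem_s j).mp hj
        rw [show θ j = w from by rw [← hιw]; exact θ_ι w hw]
        exact SolFact.base_ne_nil h hw
      · simp [θ, hj]
    let L : Fin n → ℕ := fun j => (θ j).length
    let f : Fin n → List (Fin n) := fun i => (SolFact.fac h (h i)).map ι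
    have hfac : ∀ i, SolFact.IsFac h (SolFact.fac h (h i)) (h i) :=
      fun i => SolFact.fac_isFac h (SolFact.mem_hull h i)
    refine ⟨f, θ, fun i j => SolFact.occPoly L (f i) j, ?_, ?_, θ_ne, ?_, ?_⟩
    · -- (1) h = θ ∘ f
      intro i
      have e1 : (SolFact.fac h (h i)).map (fun d => θ (ι d)) = SolFact.fac h (h i) := by
        have := List.map_congr_left (l := SolFact.fac h (h i))
          (f := fun d => θ (ι d)) (g := id) (fun d hd => θ_ι d ((hfac i).1 d hd))
        simpa using this
      calc h i = (SolFact.fac h (h i)).flatten := (hfac i).2.symm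
        _ = mApply θ (f i) := by
            rw [mApply, List.map_map]
            rw [show θ ∘ ι = fun d => θ (ι d) from rfl, e1]
    · -- (2) f is a solution
      have key2 : ∀ w : List (Fin n),
          SolFact.IsFac h ((w.map (fun i => SolFact.fac h (h i))).flatten) (mApply h w) := by
        intro w
        induction w with
        | nil => exact ⟨by simp, by simp [mApply]⟩
        | cons a t ih =>
            refine ⟨?_, ?_⟩
            · intro d hd
              simp only [List.map_cons, List.flatten_cons, List.mem_append] at hd
              rcases hd with hd | hd
              · exact (hfac a).1 d hd
              · exact ih.1 d hd
            · rw [List.map_cons, List.flatten_cons, List.flatten_append, SolFact.mApply_cons, (hfac a).2, ih.2]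
      have e : ∀ w : List (Fin n),
          mApply f w = ((w.map (fun i => SolFact.fac h (h i))).flatten).map ι := by
        intro w
        induction w with
        | nil => simp [mApply]
        | cons a t ih =>
            rw [SolFact.mApply_cons, List.map_cons, List.flatten_cons, List.map_append, ← ih]
      rw [e u, e v]
      congr 1
      exact SolFact.fac_unique h _ _ (key2 u).1 (key2 v).1
        (by rw [(key2 u).2, (key2 v).2, hsol])
    · -- (4) the polynomial identity
      intro g _ hlen i
      exact SolFact.occ_identity L g (fun j => hlen j) (f i)
    · -- (5) linear independence
      refine ⟨s, ?_, ?_⟩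
      · have hmem : (s.image dOf).card ∈
            {r | ∃ A : Finset (List ℕ), A.card = r ∧ ∀ i, InStar A (h i)} := by
          refine ⟨s.image dOf, rfl, fun i => ⟨SolFact.fac h (h i), ?_, (hfac i).2⟩⟩
          intro d hd
          have hdb : d ∈ SolFact.base h := (hfac i).1 d hd
          exact Finset.mem_image.mpr ⟨ι d, (mem_s _).mpr ⟨d, hdb, rfl⟩, dOf_ι d hdb⟩
        have h1 : mRank h ≤ (s.image dOf).card := Nat.sInf_le hmem
        rw [hr] at h1
        exact h1.trans Finset.card_image_le
      · by_contra hdep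
        rw [Fintype.not_linearIndependent_iff] at hdep
        obtain ⟨gg, hsum, j₀, hj₀⟩ := hdep
        let cc : Fin n → RatFunc ℚ := fun j => if hj : j ∈ s then gg ⟨j, hj⟩ else 0
        let TR : Polynomial ℤ →+* RatFunc ℚ :=
          (algebraMap (Polynomial ℚ) (RatFunc ℚ)).comp
            (Polynomial.mapRingHom (Int.castRingHom ℚ))
        have toRF_eq : ∀ q : Polynomial ℤ, toRF q = TR q := fun q => rfl
        let XR : RatFunc ℚ := TR Polynomial.X
        have XRne : XR ≠ 0 := by
          have hX : TR Polynomial.X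
              = algebraMap (Polynomial ℚ) (RatFunc ℚ) Polynomial.X := by
            simp [TR]
          rw [show XR = TR Polynomial.X from rfl, hX]
          exact RatFunc.algebraMap_ne_zero Polynomial.X_ne_zero
        have hrow : ∀ i, ∑ j : Fin n, cc j * toRF (SolFact.occPoly L (f i) j) = 0 := by
          intro i
          have h1 := congrFun hsum i
          set_option synthInstance.maxHeartbeats 1000000 in
          simp only [Finset.sum_apply, Pi.smul_apply, smul_eq_mul, Pi.zero_apply] at h1
          have e0 : ∑ j : Fin n, cc j * toRF (SolFact.occPoly L (f i) j)
              = ∑ j ∈ s, cc j * toRF (SolFact.occPoly L (f i) j) := by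
            refine (Finset.sum_subset (Finset.subset_univ s) ?_).symm
            intro j _ hj
            simp [cc, hj]
          rw [e0, ← Finset.sum_coe_sort s (fun j => cc j * toRF (SolFact.occPoly L (f i) j))]
          rw [← h1]
          refine Finset.sum_congr rfl fun j _ => ?_
          congr 1
          simp [cc, j.2]
        let G : List (List ℕ) → RatFunc ℚ := fun l =>
          ∑ k ∈ Finset.range l.length, cc (ι (l.getD k [])) * XR ^ ((l.take k).flatten.length)
        have G_nil : G [] = 0 := by simp [G]
        have G_cons : ∀ d t, G (d :: t) = cc (ι d) + XR ^ d.length * G t := by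
          intro d t
          show (∑ k ∈ Finset.range (d::t).length, _) = _
          rw [show ((d::t) : List (List ℕ)).length = t.length + 1 from rfl,
            Finset.sum_range_succ']
          simp only [List.getD_cons_succ, List.getD_cons_zero, List.take_succ_cons,
            List.take_zero, List.flatten_nil, List.length_nil, pow_zero, mul_one,
            List.flatten_cons, List.length_append]
          rw [add_comm, Finset.mul_sum]
          congr 1
          refine Finset.sum_congr rfl fun k _ => ?_
          rw [pow_add]
          ring
        have G_append : ∀ l₁ l₂, G (l₁ ++ l₂) = G l₁ + XR ^ l₁.flatten.length * G l₂ := by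
          intro l₁
          induction l₁ with
          | nil => intro l₂; simp [G_nil]
          | cons d t ih =>
              intro l₂
              rw [List.cons_append, G_cons, ih, G_cons, List.flatten_cons, List.length_append,
                pow_add]
              ring
        have bridge : ∀ l : List (List ℕ), (∀ d ∈ l, d ∈ SolFact.base h) →
            ∑ j : Fin n, cc j * toRF (SolFact.occPoly L (l.map ι) j) = G l := by
          intro l
          induction l with
          | nil =>
              intro _
              simp only [List.map_nil, SolFact.occPoly_nil, G_nil, toRF_eq, map_zero,
                mul_zero, Finset.sum_const_zero]
          | cons d t ih =>
              intro hl
              have hd : d ∈ SolFact.base h := hl d (by simp)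
              have hLd : L (ι d) = d.length := by
                show (θ (ι d)).length = d.length
                rw [θ_ι d hd]
              rw [List.map_cons]
              have expand : ∀ j, cc j * toRF (SolFact.occPoly L (ι d :: t.map ι) j)
                  = (if ι d = j then cc j else 0)
                    + XR ^ d.length * (cc j * toRF (SolFact.occPoly L (t.map ι) j)) := by
                intro j
                rw [SolFact.occPoly_cons, hLd, toRF_eq, map_add, map_mul, map_pow,
                  apply_ite TR, map_one, map_zero]
                rw [show TR Polynomial.X = XR from rfl, ← toRF_eq]
                rw [mul_add, mul_ite, mul_one, mul_zero]
                ring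
              calc ∑ j : Fin n, cc j * toRF (SolFact.occPoly L (ι d :: t.map ι) j)
                  = ∑ j : Fin n, ((if ι d = j then cc j else 0)
                      + XR ^ d.length * (cc j * toRF (SolFact.occPoly L (t.map ι) j))) :=
                    Finset.sum_congr rfl fun j _ => expand j
                _ = cc (ι d) + XR ^ d.length * G t := by
                    rw [Finset.sum_add_distrib, Finset.sum_ite_eq, ← Finset.mul_sum,
                      ih (fun e he => hl e (by simp [he]))]
                    simp
                _ = G (d :: t) := (G_cons d t).symm
        have hGrow : ∀ i, G (SolFact.fac h (h i)) = 0 := by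
          intro i
          rw [← bridge _ (hfac i).1]
          exact hrow i
        let Z : Set (List ℕ) := {w | w ∈ SolFact.hull h ∧ G (SolFact.fac h w) = 0}
        have Zstable : SolFact.IsStable Z := by
          refine ⟨⟨(SolFact.hull_stable h).1, ?_⟩, ?_, ?_⟩
          · rw [SolFact.fac_nil h]; exact G_nil
          · intro a ha b hb
            refine ⟨(SolFact.hull_stable h).2.1 a ha.1 b hb.1, ?_⟩
            rw [SolFact.fac_append h ha.1 hb.1, G_append, ha.2, hb.2]
            ring
          · intro a b w ha hb haw hwb
            have hwH : w ∈ SolFact.hull h :=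
              (SolFact.hull_stable h).2.2 a b w ha.1 hb.1 haw.1 hwb.1
            refine ⟨hwH, ?_⟩
            have e1 : (0:RatFunc ℚ)
                = XR ^ ((SolFact.fac h a).flatten.length) * G (SolFact.fac h w) := by
              have h2 := haw.2
              rw [SolFact.fac_append h ha.1 hwH, G_append, ha.2, zero_add] at h2
              exact h2.symm
            rcases mul_eq_zero.mp e1.symm with hc | hc
            · exact absurd hc (pow_ne_zero _ XRne)
            · exact hc
        have hZimg : ∀ i, h i ∈ Z := fun i => ⟨SolFact.mem_hull h i, hGrow i⟩
        have hsub := SolFact.hull_min h Zstable hZimg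
        have hccd : ∀ d, d ∈ SolFact.base h → cc (ι d) = 0 := by
          intro d hd
          have hdZ : d ∈ Z := hsub hd.1
          have h2 := hdZ.2
          rw [SolFact.fac_base h hd, G_cons, G_nil] at h2
          simpa using h2
        obtain ⟨w, hw, hιw⟩ := (mem_s (↑j₀)).mp j₀.2
        have hz : cc (↑j₀ : Fin n) = 0 := by rw [← hιw]; exact hccd w hw
        rw [show cc (↑j₀ : Fin n) = gg j₀ from by simp [cc, j₀.2]] at hz
        exact hj₀ hz
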